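/- Let b, μ, k > 0, p > 0, let P ∈ ℝ, let R₀ ∈ ℝ, set Q = −((μ+k)·μ/(p·b²))·(R₀ − 1) and R_P = 1 − p·b²·P²/(4·(μ+k)·μ), and assume R₀ < R_P. Then the quadratic equation x² + P·x + Q = 0 has no real roots; in particular it has no positive root. (This is the no-endemic-equilibrium case of the endemic-equilibrium theorem for α = 0.) -/
import Mathlib


/-- The no-endemic-equilibrium case for `α = 0`: if `R₀ < R_P`, the endemic
quadratic `x² + P·x + Q` has no real roots; in particular no positive root. -/
theorem no_endemic_equilibrium
    (b μ k p : ℝ) (hb : 0 < b) (hμ : 0 < μ) (hk : 0 < k) (hp : 0 < p)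
    (P R0 Q RP : ℝ)
    (hQ : Q = -((μ + k) * μ / (p * b ^ 2)) * (R0 - 1))
    (hRP : RP = 1 - p * b ^ 2 * P ^ 2 / (4 * (μ + k) * μ))
    (hlt : R0 < RP) :
    (∀ x : ℝ, x ^ 2 + P * x + Q ≠ 0) ∧
    ¬ ∃ x : ℝ, 0 < x ∧ x ^ 2 + P * x + Q = 0 := by
  have hc : 0 < (μ + k) * μ := by positivity
  have hd : 0 < p * b ^ 2 := by positivity
  have key : P ^ 2 < 4 * Q := by
    rw [hQ]; rw [hRP] at hlt
    have e : 4 * (-((μ + k) * μ / (p * b ^ 2)) * (R0 - 1))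
        = 4 * (μ + k) * μ * (1 - R0) / (p * b ^ 2) := by
      field_simp; ring
    rw [e, lt_div_iff₀ hd]
    have h2 : p * b ^ 2 * P ^ 2 / (4 * (μ + k) * μ) < 1 - R0 := by linarith
    rw [div_lt_iff₀ (by positivity : (0:ℝ) < 4 * (μ + k) * μ)] at h2
    nlinarith
  have pos : ∀ x : ℝ, 0 < x ^ 2 + P * x + Q := by
    intro x
    nlinarith [sq_nonneg (x + P / 2)]
  exact ⟨fun x => (pos x).ne', fun ⟨x, _, hx⟩ => (pos x).ne' hx⟩
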